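/- For every dimension d ≥ 2 and every n ≥ 1, M_d(n,n) ≤ 2·W_d(2n). -/

import Mathlib

open Pointwise Filter

noncomputable section

/-- A set in `ℝ^d` is convexly independent if no point of it lies in the
convex hull of the other points. -/
def ConvInd {d : ℕ} (S : Set (Fin d → ℝ)) : Prop :=
  ∀ p ∈ S, p ∉ convexHull ℝ (S \ {p})

/-- `Efun d n` : the maximum, over `n`-point sets `P ⊂ ℝ^d`, of the number of
unordered pairs of distinct points of `P` whose midpoints are pairwise distinct
and form a convexly independent set.  Unordered pairs are encoded as ordered
pairs with the reversed pair excluded. -/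
def Efun (d n : ℕ) : ℕ :=
  sSup {k | ∃ (P : Finset (Fin d → ℝ)) (T : Finset ((Fin d → ℝ) × (Fin d → ℝ))),
    P.card = n ∧
    (∀ e ∈ T, e.1 ∈ P ∧ e.2 ∈ P ∧ e.1 ≠ e.2 ∧ (e.2, e.1) ∉ T) ∧
    Set.InjOn (fun e : (Fin d → ℝ) × (Fin d → ℝ) => midpoint ℝ e.1 e.2) ↑T ∧
    ConvInd ((fun e : (Fin d → ℝ) × (Fin d → ℝ) => midpoint ℝ e.1 e.2) '' ↑T) ∧
    T.card = k}

/-- `Mfun d m n` : the maximum, over `m`-point sets `P` and `n`-point sets `Q` in `ℝ^d`,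
of the size of a convexly independent subset of the Minkowski sum `P + Q`. -/
def Mfun (d m n : ℕ) : ℕ :=
  sSup {k | ∃ P Q S : Finset (Fin d → ℝ),
    P.card = m ∧ Q.card = n ∧
    (S : Set (Fin d → ℝ)) ⊆ (P : Set (Fin d → ℝ)) + (Q : Set (Fin d → ℝ)) ∧
    ConvInd (S : Set (Fin d → ℝ)) ∧ S.card = k}

/-- A norm on `ℝ^d` whose unit ball is strictly convex (the unit sphere contains
no nondegenerate segment, expressed via midpoints of distinct unit vectors). -/
structure StrictNorm (d : ℕ) where
  toFun : (Fin d → ℝ) → ℝ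
  eq_zero_iff : ∀ x, toFun x = 0 ↔ x = 0
  smul_eq : ∀ (a : ℝ) (x : Fin d → ℝ), toFun (a • x) = |a| * toFun x
  add_le : ∀ x y, toFun (x + y) ≤ toFun x + toFun y
  strictly_convex : ∀ x y, toFun x = 1 → toFun y = 1 → x ≠ y →
    toFun ((1 / 2 : ℝ) • (x + y)) < 1

/-- A (not necessarily strictly convex) norm on `ℝ^d`. -/
structure NormOn (d : ℕ) where
  toFun : (Fin d → ℝ) → ℝ
  eq_zero_iff : ∀ x, toFun x = 0 ↔ x = 0
  smul_eq : ∀ (a : ℝ) (x : Fin d → ℝ), toFun (a • x) = |a| * toFun x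
  add_le : ∀ x y, toFun (x + y) ≤ toFun x + toFun y

/-- `Wfun d n` : the maximum, over `n`-point sets `S ⊂ ℝ^d` and strictly convex
norms on `ℝ^d`, of the number of pairwise nonparallel unit-distance pairs in `S`.
(The nonparallelity condition between distinct ordered pairs automatically rules
out listing any unordered pair twice.) -/
def Wfun (d n : ℕ) : ℕ :=
  sSup {k | ∃ (S : Finset (Fin d → ℝ)) (ν : StrictNorm d)
      (T : Finset ((Fin d → ℝ) × (Fin d → ℝ))),
    S.card = n ∧
    (∀ e ∈ T, e.1 ∈ S ∧ e.2 ∈ S ∧ ν.toFun (e.1 - e.2) = 1) ∧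
    (∀ e ∈ T, ∀ f ∈ T, e ≠ f → ∀ c : ℝ, e.1 - e.2 ≠ c • (f.1 - f.2)) ∧
    T.card = k}

/-- `Ufun d n` : the maximum, over `n`-point sets `S ⊂ ℝ^d` and strictly convex
norms on `ℝ^d`, of the number of unordered unit-distance pairs in `S`. -/
def Ufun (d n : ℕ) : ℕ :=
  sSup {k | ∃ (S : Finset (Fin d → ℝ)) (ν : StrictNorm d)
      (T : Finset ((Fin d → ℝ) × (Fin d → ℝ))),
    S.card = n ∧
    (∀ e ∈ T, e.1 ∈ S ∧ e.2 ∈ S ∧ e.1 ≠ e.2 ∧ ν.toFun (e.1 - e.2) = 1 ∧ (e.2, e.1) ∉ T) ∧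
    T.card = k}

/-- `Dfun d n` : the maximum, over `n`-point sets `S ⊂ ℝ^d` and strictly convex
norms on `ℝ^d`, of the number of unordered diameter pairs in `S` (pairs of points
whose distance equals the diameter `D` of `S` in the norm). -/
def Dfun (d n : ℕ) : ℕ :=
  sSup {k | ∃ (S : Finset (Fin d → ℝ)) (ν : StrictNorm d)
      (T : Finset ((Fin d → ℝ) × (Fin d → ℝ))) (D : ℝ),
    S.card = n ∧
    (∀ p ∈ S, ∀ q ∈ S, ν.toFun (p - q) ≤ D) ∧
    (∃ p ∈ S, ∃ q ∈ S, ν.toFun (p - q) = D) ∧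
    (∀ e ∈ T, e.1 ∈ S ∧ e.2 ∈ S ∧ e.1 ≠ e.2 ∧ ν.toFun (e.1 - e.2) = D ∧ (e.2, e.1) ∉ T) ∧
    T.card = k}

/-- A family of sets in `ℝ^d` is strictly antipodal if for each pair of points
`p ∈ A i`, `q ∈ A j` with `i ≠ j` there is a linear functional `φ` with
`φ p < φ r < φ q` for every other point `r` of the union. -/
def StrictlyAntipodal {d : ℕ} {ι : Type*} (A : ι → Set (Fin d → ℝ)) : Prop :=
  ∀ i j, i ≠ j → ∀ p ∈ A i, ∀ q ∈ A j, ∃ φ : (Fin d → ℝ) →ₗ[ℝ] ℝ,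
    ∀ r ∈ ⋃ t, A t, r ≠ p → r ≠ q → φ p < φ r ∧ φ r < φ q

/-- `aconst d` = `a(d)` : the largest `k` such that for every `m` there is a strictly
antipodal family of `k` sets in `ℝ^d`, each of size at least `m`. -/
def aconst (d : ℕ) : ℕ :=
  sSup {k | ∀ m : ℕ, ∃ A : Fin k → Finset (Fin d → ℝ),
    (∀ i, m ≤ (A i).card) ∧ StrictlyAntipodal (fun i => ((A i : Set (Fin d → ℝ))))}

/-- The set of midpoints between points in different members of a family of finite sets. -/
def midSet {d : ℕ} {ι : Type*} (B : ι → Finset (Fin d → ℝ)) : Set (Fin d → ℝ) :=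
  {x | ∃ i j, i ≠ j ∧ ∃ p ∈ B i, ∃ q ∈ B j, x = midpoint ℝ p q}

/-- The set of differences between points in different members of a family of sets. -/
def diffSet {d : ℕ} {ι : Type*} (A : ι → Set (Fin d → ℝ)) : Set (Fin d → ℝ) :=
  {x | ∃ i j, i ≠ j ∧ ∃ p ∈ A i, ∃ q ∈ A j, x = p - q}


namespace SVaux

open Topology

variable {d : ℕ}

/-- bare euclidean inner product on `Fin d → ℝ` -/
def ip (x y : Fin d → ℝ) : ℝ := ∑ i, x i * y i

/-- squared euclidean norm -/
def nsq (x : Fin d → ℝ) : ℝ := ip x x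

lemma ip_comm (x y : Fin d → ℝ) : ip x y = ip y x := by
  unfold ip; exact Finset.sum_congr rfl fun i _ => mul_comm _ _

lemma ip_add_left (x y z : Fin d → ℝ) : ip (x + y) z = ip x z + ip y z := by
  unfold ip; rw [← Finset.sum_add_distrib]
  exact Finset.sum_congr rfl fun i _ => by simp [add_mul]

lemma ip_add_right (x y z : Fin d → ℝ) : ip x (y + z) = ip x y + ip x z := by
  rw [ip_comm, ip_add_left, ip_comm y x, ip_comm z x]

lemma ip_smul_left (a : ℝ) (x y : Fin d → ℝ) : ip (a • x) y = a * ip x y := by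
  unfold ip; rw [Finset.mul_sum]
  exact Finset.sum_congr rfl fun i _ => by simp [mul_assoc]

lemma ip_smul_right (a : ℝ) (x y : Fin d → ℝ) : ip x (a • y) = a * ip x y := by
  rw [ip_comm, ip_smul_left, ip_comm]

lemma ip_neg_left (x y : Fin d → ℝ) : ip (-x) y = - ip x y := by
  have : (-x) = (-1 : ℝ) • x := by ext i; simp
  rw [this, ip_smul_left]; ring

lemma ip_neg_right (x y : Fin d → ℝ) : ip x (-y) = - ip x y := by
  rw [ip_comm, ip_neg_left, ip_comm]

lemma ip_sub_left (x y z : Fin d → ℝ) : ip (x - y) z = ip x z - ip y z := by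
  rw [sub_eq_add_neg, ip_add_left, ip_neg_left]; ring

lemma ip_sub_right (x y z : Fin d → ℝ) : ip x (y - z) = ip x y - ip x z := by
  rw [ip_comm, ip_sub_left, ip_comm y x, ip_comm z x]

lemma sq_nonneg' (x : Fin d → ℝ) : 0 ≤ nsq x := by
  unfold nsq ip; exact Finset.sum_nonneg fun i _ => mul_self_nonneg _

lemma sq_eq_zero' {x : Fin d → ℝ} (h : nsq x = 0) : x = 0 := by
  unfold nsq ip at h
  funext i
  have h0 : ∀ j ∈ Finset.univ, (0:ℝ) ≤ x j * x j := fun j _ => mul_self_nonneg _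
  have := (Finset.sum_eq_zero_iff_of_nonneg h0).1 h i (Finset.mem_univ i)
  have := mul_self_eq_zero.1 this
  simpa using this

lemma sq_neg (x : Fin d → ℝ) : nsq (-x) = nsq x := by
  unfold nsq; rw [ip_neg_left, ip_neg_right]; ring

lemma sq_smul (a : ℝ) (x : Fin d → ℝ) : nsq (a • x) = a^2 * nsq x := by
  unfold nsq; rw [ip_smul_left, ip_smul_right]; ring

lemma sq_add (x y : Fin d → ℝ) : nsq (x + y) = nsq x + 2 * ip x y + nsq y := by
  unfold nsq
  rw [ip_add_left, ip_add_right, ip_add_right, ip_comm y x]; ring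

lemma sq_sub (x y : Fin d → ℝ) : nsq (x - y) = nsq x - 2 * ip x y + nsq y := by
  rw [sub_eq_add_neg, sq_add, ip_neg_right, sq_neg]; ring

lemma sq_pos_of_ne {x : Fin d → ℝ} (h : x ≠ 0) : 0 < nsq x := by
  rcases lt_or_eq_of_le (sq_nonneg' x) with h' | h'
  · exact h'
  · exact absurd (sq_eq_zero' h'.symm) h

/-- convexity identity for the squared norm -/
lemma sq_combo {a b : ℝ} (hab : a + b = 1) (x y : Fin d → ℝ) :
    a * nsq x + b * nsq y - nsq (a • x + b • y) = a * b * nsq (x - y) := by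
  have h1 : nsq (a • x + b • y) = a^2 * nsq x + 2*(a*b) * ip x y + b^2 * nsq y := by
    rw [sq_add, sq_smul, sq_smul, ip_smul_left, ip_smul_right]; ring
  have h2 : nsq (x - y) = nsq x - 2 * ip x y + nsq y := sq_sub x y
  have hb : b = 1 - a := by linarith
  subst hb
  rw [h1, h2]; ring

lemma sq_le_two_add_two (a b : Fin d → ℝ) : nsq a ≤ 2 * nsq (a - b) + 2 * nsq b := by
  have h := sq_nonneg' (a - (2:ℝ) • b)
  have h1 : nsq (a - (2:ℝ) • b) = nsq a - 2*(2:ℝ) * ip a b + 4 * nsq b := by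
    rw [sq_sub, ip_smul_right, sq_smul]; ring
  have h2 : nsq (a - b) = nsq a - 2 * ip a b + nsq b := sq_sub a b
  nlinarith [h, h1, h2]


lemma continuous_sq_sub (c : Fin d → ℝ) : Continuous fun v : Fin d → ℝ => nsq (v - c) := by
  have h : (fun v : Fin d → ℝ => nsq (v - c)) =
      fun v => ∑ i, (v i - c i) * (v i - c i) := by
    funext v; unfold nsq ip; simp
  rw [h]
  exact continuous_finset_sum _ fun i _ =>
    (((continuous_apply i).sub continuous_const).mul ((continuous_apply i).sub continuous_const))

lemma continuous_sq_add (c : Fin d → ℝ) : Continuous fun v : Fin d → ℝ => nsq (v + c) := by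
  have h : (fun v : Fin d → ℝ => nsq (v + c)) =
      fun v => ∑ i, (v i + c i) * (v i + c i) := by
    funext v; unfold nsq ip; simp
  rw [h]
  exact continuous_finset_sum _ fun i _ =>
    (((continuous_apply i).add continuous_const).mul ((continuous_apply i).add continuous_const))

/-- in a nonempty open set we can find a point avoiding finitely many affine hyperplanes -/
lemma exists_forall_ne (L : List ((((Fin d → ℝ)) →ₗ[ℝ] ℝ) × ℝ)) (hL : ∀ p ∈ L, p.1 ≠ 0)
    (O : Set (Fin d → ℝ)) (hO : IsOpen O) (hne : O.Nonempty) :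
    ∃ w ∈ O, ∀ p ∈ L, p.1 w ≠ p.2 := by
  induction L generalizing O with
  | nil => obtain ⟨w, hw⟩ := hne; exact ⟨w, hw, by simp⟩
  | cons p L ihL =>
    have hp : p.1 ≠ 0 := hL p List.mem_cons_self
    -- find a point of O avoiding the hyperplane of p
    obtain ⟨w₀, hw₀⟩ := hne
    have hcont : Continuous p.1 := p.1.continuous_of_finiteDimensional
    have hops : IsOpen (O ∩ {w | p.1 w ≠ p.2}) := by
      refine hO.inter ?_
      have : {w | p.1 w ≠ p.2} = p.1 ⁻¹' ({p.2}ᶜ) := rfl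
      rw [this]; exact (isOpen_compl_singleton).preimage hcont
    have hnem : (O ∩ {w | p.1 w ≠ p.2}).Nonempty := by
      by_cases h0 : p.1 w₀ ≠ p.2
      · exact ⟨w₀, hw₀, h0⟩
      push_neg at h0
      obtain ⟨u, hu⟩ : ∃ u, p.1 u ≠ 0 := by
        by_contra hcon; push_neg at hcon
        exact hp (LinearMap.ext fun u => by simpa using hcon u)
      have hu0 : u ≠ 0 := by rintro rfl; simp at hu
      obtain ⟨ε, hε, hball⟩ := Metric.isOpen_iff.1 hO w₀ hw₀
      set t : ℝ := ε / (2 * ‖u‖) with ht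
      have hnu : 0 < ‖u‖ := norm_pos_iff.2 hu0
      have htpos : 0 < t := by positivity
      refine ⟨w₀ + t • u, hball ?_, ?_⟩
      · rw [Metric.mem_ball, dist_self_add_left, norm_smul, Real.norm_eq_abs,
          abs_of_pos htpos]
        have heq : t * ‖u‖ = ε / 2 := by
          rw [ht]; field_simp
        rw [heq]; linarith
      · simp only [Set.mem_setOf_eq, map_add, map_smul, h0, smul_eq_mul]
        intro hcon
        have : t * p.1 u = 0 := by linarith
        rcases mul_eq_zero.1 this with h | h
        · exact htpos.ne' h
        · exact hu h
    obtain ⟨w, ⟨hwO, hwp⟩, hwL⟩ := ihL (fun q hq => hL q (List.mem_cons_of_mem _ hq)) _ hops hnem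
    exact ⟨w, hwO, fun q hq => by
      rcases List.mem_cons.1 hq with rfl | hq
      · exact hwp
      · exact hwL q hq⟩

/-- a nonzero linear functional annihilating a given vector, `d ≥ 2` -/
lemma exists_ann (hd : 2 ≤ d) (v : Fin d → ℝ) :
    ∃ h : (Fin d → ℝ) →ₗ[ℝ] ℝ, h ≠ 0 ∧ h v = 0 := by
  have h0 : (0:ℕ) < d := by omega
  have h1 : (1:ℕ) < d := by omega
  set i0 : Fin d := ⟨0, h0⟩
  set i1 : Fin d := ⟨1, h1⟩
  have hne : i0 ≠ i1 := by simp [i0, i1, Fin.ext_iff]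
  by_cases hv : v i0 = 0 ∧ v i1 = 0
  · refine ⟨LinearMap.proj i0, ?_, hv.1⟩
    intro hcon
    have := congrArg (fun f => f (Pi.single i0 (1:ℝ))) (congrArg DFunLike.coe hcon)
    simp [LinearMap.proj_apply] at this
  · refine ⟨v i1 • LinearMap.proj i0 - v i0 • LinearMap.proj i1, ?_, ?_⟩
    · intro hcon
      have happ : ∀ u : Fin d → ℝ, v i1 * u i0 - v i0 * u i1 = 0 := by
        intro u
        have := LinearMap.congr_fun hcon u
        simpa [LinearMap.proj_apply, smul_eq_mul] using this
      set uu : Fin d → ℝ := (Pi.single i0 (v i1) : Fin d → ℝ) - (Pi.single i1 (v i0) : Fin d → ℝ) with huu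
      have h2 := happ uu
      have e0 : uu i0 = v i1 := by
        simp [huu, Pi.single_apply, hne.symm]
      have e1 : uu i1 = -(v i0) := by
        simp [huu, Pi.single_apply, hne]
      rw [e0, e1] at h2
      have hv0 : v i0 = 0 := by nlinarith [mul_self_nonneg (v i0), mul_self_nonneg (v i1)]
      have hv1 : v i1 = 0 := by nlinarith [mul_self_nonneg (v i0), mul_self_nonneg (v i1)]
      exact hv ⟨hv0, hv1⟩
    · simp [LinearMap.proj_apply, smul_eq_mul]; ring

/-- an exposing functional for each point of a convexly independent finite set -/
lemma exists_expose (hd : 1 ≤ d) (S : Finset (Fin d → ℝ)) (hCI : ConvInd (S : Set (Fin d → ℝ)))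
    (s : Fin d → ℝ) :
    ∃ f : (Fin d → ℝ) →ₗ[ℝ] ℝ, f ≠ 0 ∧ (s ∈ S → ∀ x ∈ S, x ≠ s → f x < f s) := by
  classical
  by_cases hs : s ∈ S
  · have hsep : s ∉ convexHull ℝ ((S : Set (Fin d → ℝ)) \ {s}) := hCI s hs
    have hfin : ((S : Set (Fin d → ℝ)) \ {s}).Finite := S.finite_toSet.subset Set.diff_subset
    have hcl : IsClosed (convexHull ℝ ((S : Set (Fin d → ℝ)) \ {s})) :=
      (hfin.isCompact_convexHull (𝕜 := ℝ)).isClosed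
    obtain ⟨f, u, hfu, hus⟩ :=
      geometric_hahn_banach_closed_point (convex_convexHull ℝ _) hcl hsep
    have hexp : ∀ x ∈ S, x ≠ s → f x < f s := by
      intro x hx hxs
      have hxm : x ∈ convexHull ℝ ((S : Set (Fin d → ℝ)) \ {s}) :=
        subset_convexHull ℝ _ ⟨hx, hxs⟩
      exact lt_trans (hfu x hxm) hus
    by_cases hf0 : (f.toLinearMap : (Fin d → ℝ) →ₗ[ℝ] ℝ) = 0
    · -- then S has no other points, vacuous
      refine ⟨LinearMap.proj ⟨0, by omega⟩, ?_, ?_⟩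
      · intro hcon
        have := LinearMap.congr_fun hcon (Pi.single (⟨0, by omega⟩ : Fin d) (1:ℝ))
        simp [LinearMap.proj_apply] at this
      · intro _ x hx hxs
        exfalso
        have := hexp x hx hxs
        rw [show f x = f.toLinearMap x from rfl, show f s = f.toLinearMap s from rfl, hf0] at this
        simp at this
    · exact ⟨f.toLinearMap, hf0, fun _ => hexp⟩
  · refine ⟨LinearMap.proj ⟨0, by omega⟩, ?_, fun h => absurd h hs⟩
    intro hcon
    have := LinearMap.congr_fun hcon (Pi.single (⟨0, by omega⟩ : Fin d) (1:ℝ))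
    simp [LinearMap.proj_apply] at this


lemma ip_vec (f : (Fin d → ℝ) →ₗ[ℝ] ℝ) (v : Fin d → ℝ) :
    ip (fun i => f (fun j => if i = j then 1 else 0)) v = f v := by
  rw [LinearMap.pi_apply_eq_sum_univ f v]
  unfold ip
  exact Finset.sum_congr rfl fun i _ => by rw [smul_eq_mul, mul_comm]


set_option maxHeartbeats 1000000 in
lemma exists_strictNorm (Z : Finset (Fin d → ℝ)) (hZne : Z.Nonempty)
    (g : (Fin d → ℝ) → (Fin d → ℝ))
    (h1 : ∀ z ∈ Z, ∀ y ∈ Z, y ≠ z → ip (g z) y < ip (g z) z)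
    (h2 : ∀ z ∈ Z, ∀ y ∈ Z, 0 < ip (g z) z + ip (g z) y) :
    ∃ ν : StrictNorm d, ∀ z ∈ Z, ν.toFun z = 1 := by
  classical
  have hgz : ∀ z ∈ Z, 0 < ip (g z) z := fun z hz => by
    have := h2 z hz z hz; linarith
  -- the radius parameters, chosen large enough
  obtain ⟨ρ, hρge, hρgey⟩ :
      ∃ ρ : (Fin d → ℝ) → ℝ,
        (∀ z, 1 + nsq z / (2 * ip (g z) z) ≤ ρ z) ∧
        (∀ z, ∀ y ∈ Z,
          1 + max (nsq (y - z) / (2 * (ip (g z) z - ip (g z) y)))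
            (nsq (y + z) / (2 * (ip (g z) z + ip (g z) y))) ≤ ρ z) := by
    refine ⟨fun z => 1 + max (nsq z / (2 * ip (g z) z))
      (Z.sup' hZne (fun y => max (nsq (y - z) / (2 * (ip (g z) z - ip (g z) y)))
        (nsq (y + z) / (2 * (ip (g z) z + ip (g z) y))))), ?_, ?_⟩
    · intro z
      have := le_max_left (nsq z / (2 * ip (g z) z))
        (Z.sup' hZne (fun y => max (nsq (y - z) / (2 * (ip (g z) z - ip (g z) y)))
          (nsq (y + z) / (2 * (ip (g z) z + ip (g z) y)))))
      linarith
    · intro z y hy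
      have hle := Finset.le_sup' (fun y => max (nsq (y - z) / (2 * (ip (g z) z - ip (g z) y)))
          (nsq (y + z) / (2 * (ip (g z) z + ip (g z) y)))) hy
      have := le_max_right (nsq z / (2 * ip (g z) z))
        (Z.sup' hZne (fun y => max (nsq (y - z) / (2 * (ip (g z) z - ip (g z) y)))
          (nsq (y + z) / (2 * (ip (g z) z + ip (g z) y)))))
      dsimp only at hle ⊢
      linarith
  have hρpos : ∀ z ∈ Z, 0 < ρ z := by
    intro z hz
    have h1' := hρge z
    have h2' : 0 ≤ nsq z / (2 * ip (g z) z) := by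
      apply div_nonneg (sq_nonneg' z)
      have := hgz z hz; linarith
    linarith
  -- the key strict inequalities
  have key1 : ∀ z ∈ Z, nsq z < 2 * ρ z * ip (g z) z := by
    intro z hz
    have hpos : 0 < 2 * ip (g z) z := by have := hgz z hz; linarith
    have hlt : nsq z / (2 * ip (g z) z) < ρ z := by have := hρge z; linarith
    calc nsq z = nsq z / (2 * ip (g z) z) * (2 * ip (g z) z) := by rw [div_mul_cancel₀ _ hpos.ne']
    _ < ρ z * (2 * ip (g z) z) := mul_lt_mul_of_pos_right hlt hpos
    _ = 2 * ρ z * ip (g z) z := by ring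
  have key2 : ∀ z ∈ Z, ∀ y ∈ Z, y ≠ z →
      nsq (y - z) < 2 * ρ z * (ip (g z) z - ip (g z) y) := by
    intro z hz y hy hyz
    have hD : 0 < ip (g z) z - ip (g z) y := by have := h1 z hz y hy hyz; linarith
    have hpos : 0 < 2 * (ip (g z) z - ip (g z) y) := by linarith
    have hlt : nsq (y - z) / (2 * (ip (g z) z - ip (g z) y)) < ρ z := by
      have h' := hρgey z y hy
      have := le_max_left (nsq (y - z) / (2 * (ip (g z) z - ip (g z) y)))
        (nsq (y + z) / (2 * (ip (g z) z + ip (g z) y)))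
      linarith
    calc nsq (y - z) = nsq (y - z) / (2 * (ip (g z) z - ip (g z) y)) *
          (2 * (ip (g z) z - ip (g z) y)) := by field_simp
    _ < ρ z * (2 * (ip (g z) z - ip (g z) y)) := mul_lt_mul_of_pos_right hlt hpos
    _ = 2 * ρ z * (ip (g z) z - ip (g z) y) := by ring
  have key3 : ∀ z ∈ Z, ∀ y ∈ Z,
      nsq (y + z) < 2 * ρ z * (ip (g z) z + ip (g z) y) := by
    intro z hz y hy
    have hD : 0 < ip (g z) z + ip (g z) y := h2 z hz y hy
    have hpos : 0 < 2 * (ip (g z) z + ip (g z) y) := by linarith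
    have hlt : nsq (y + z) / (2 * (ip (g z) z + ip (g z) y)) < ρ z := by
      have h' := hρgey z y hy
      have := le_max_right (nsq (y - z) / (2 * (ip (g z) z - ip (g z) y)))
        (nsq (y + z) / (2 * (ip (g z) z + ip (g z) y)))
      linarith
    calc nsq (y + z) = nsq (y + z) / (2 * (ip (g z) z + ip (g z) y)) *
          (2 * (ip (g z) z + ip (g z) y)) := by field_simp
    _ < ρ z * (2 * (ip (g z) z + ip (g z) y)) := mul_lt_mul_of_pos_right hlt hpos
    _ = 2 * ρ z * (ip (g z) z + ip (g z) y) := by ring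
  clear hρge hρgey
  -- the body
  obtain ⟨c, R, hcdef, hRdef⟩ :
      ∃ (c : (Fin d → ℝ) → (Fin d → ℝ)) (R : (Fin d → ℝ) → ℝ),
        (∀ z, c z = z - ρ z • g z) ∧ (∀ z, R z = nsq (ρ z • g z)) :=
    ⟨fun z => z - ρ z • g z, fun z => nsq (ρ z • g z), fun _ => rfl, fun _ => rfl⟩
  have expandm : ∀ z v, nsq (v - c z) = nsq (v - z) + 2 * ρ z * ip (g z) (v - z) + R z := by
    intro z v
    have hvc : v - c z = (v - z) + ρ z • g z := by rw [hcdef]; abel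
    rw [hvc, sq_add, hRdef]
    have : ip (v - z) (ρ z • g z) = ρ z * ip (g z) (v - z) := by
      rw [ip_smul_right, ip_comm]
    rw [this]; ring
  have expandp : ∀ z v, nsq (v + c z) = nsq (v + z) - 2 * ρ z * ip (g z) (v + z) + R z := by
    intro z v
    have hvc : v + c z = (v + z) - ρ z • g z := by rw [hcdef]; abel
    rw [hvc, sq_sub, hRdef]
    have : ip (v + z) (ρ z • g z) = ρ z * ip (g z) (v + z) := by
      rw [ip_smul_right, ip_comm]
    rw [this]; ring
  set B : Set (Fin d → ℝ) := {v | ∀ z ∈ Z, nsq (v - c z) ≤ R z ∧ nsq (v + c z) ≤ R z} with hB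
  set Bo : Set (Fin d → ℝ) := {v | ∀ z ∈ Z, nsq (v - c z) < R z ∧ nsq (v + c z) < R z} with hBo
  have hBoB : Bo ⊆ B := fun v hv z hz => ⟨(hv z hz).1.le, (hv z hz).2.le⟩
  have hBoOpen : IsOpen Bo := by
    have heq : Bo = ⋂ z ∈ Z, ({v | nsq (v - c z) < R z} ∩ {v | nsq (v + c z) < R z}) := by
      ext v
      simp only [hBo, Set.mem_setOf_eq, Set.mem_iInter, Set.mem_inter_iff]
    rw [heq]
    refine isOpen_biInter_finset fun z _ => IsOpen.inter ?_ ?_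
    · exact isOpen_Iio.preimage (continuous_sq_sub (c z))
    · exact isOpen_Iio.preimage (continuous_sq_add (c z))
  have hBclosed : IsClosed B := by
    have heq : B = ⋂ z ∈ Z, ({v | nsq (v - c z) ≤ R z} ∩ {v | nsq (v + c z) ≤ R z}) := by
      ext v
      simp only [hB, Set.mem_setOf_eq, Set.mem_iInter, Set.mem_inter_iff]
    rw [heq]
    refine isClosed_biInter fun z _ => IsClosed.inter ?_ ?_
    · exact isClosed_Iic.preimage (continuous_sq_sub (c z))
    · exact isClosed_Iic.preimage (continuous_sq_add (c z))
  have h0Bo : (0 : Fin d → ℝ) ∈ Bo := by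
    intro z hz
    have e1 : nsq ((0:Fin d → ℝ) - z) = nsq z := by rw [zero_sub, sq_neg]
    have e2 : ip (g z) ((0:Fin d → ℝ) - z) = - ip (g z) z := by
      rw [ip_sub_right]
      have : ip (g z) (0 : Fin d → ℝ) = 0 := by simp [ip]
      rw [this]; ring
    have e3 : nsq ((0:Fin d → ℝ) + z) = nsq z := by rw [zero_add]
    have e4 : ip (g z) ((0:Fin d → ℝ) + z) = ip (g z) z := by rw [zero_add]
    constructor
    · rw [expandm, e1, e2]
      have := key1 z hz; linarith
    · rw [expandp, e3, e4]
      have := key1 z hz; linarith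
  have hZB : ∀ y ∈ Z, y ∈ B := by
    intro y hy z hz
    constructor
    · rw [expandm, ip_sub_right]
      rcases eq_or_ne y z with rfl | hyz
      · have : nsq (y - y) = 0 := by
          rw [sub_self]; simp [nsq, ip]
        rw [this]; ring_nf
        simp
      · have := key2 z hz y hy hyz; linarith
    · rw [expandp, ip_add_right]
      have := key3 z hz y hy; linarith
  have hconv : Convex ℝ B := by
    intro x hx y hy a b ha hb hab
    intro z hz
    obtain rfl : b = 1 - a := by linarith
    have combom : a • x + (1-a) • y - c z = a • (x - c z) + (1-a) • (y - c z) := by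
      module
    have combop : a • x + (1-a) • y + c z = a • (x + c z) + (1-a) • (y + c z) := by
      module
    constructor
    · rw [combom]
      have hcb := sq_combo (show a + (1-a) = 1 by ring) (x - c z) (y - c z)
      have h1' := (hx z hz).1
      have h2' := (hy z hz).1
      nlinarith [mul_nonneg (mul_nonneg ha hb) (sq_nonneg' ((x - c z) - (y - c z)))]
    · rw [combop]
      have hcb := sq_combo (show a + (1-a) = 1 by ring) (x + c z) (y + c z)
      have h1' := (hx z hz).2
      have h2' := (hy z hz).2
      nlinarith [mul_nonneg (mul_nonneg ha hb) (sq_nonneg' ((x + c z) - (y + c z)))]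
  have hsymm : ∀ v ∈ B, -v ∈ B := by
    intro v hv z hz
    constructor
    · have e : -v - c z = -(v + c z) := by abel
      rw [e, sq_neg]; exact (hv z hz).2
    · have e : -v + c z = -(v - c z) := by abel
      rw [e, sq_neg]; exact (hv z hz).1
  have hbal : Balanced ℝ B := by
    intro a ha
    rintro x' ⟨y, hyB, rfl⟩
    have hcomb : ((1+a)/2) • y + ((1-a)/2) • (-y) = a • y := by
      module
    show a • y ∈ B
    rw [← hcomb]
    have ha' : |a| ≤ 1 := by rwa [Real.norm_eq_abs] at ha
    have ha1 : -1 ≤ a := (abs_le.1 ha').1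
    have ha2 : a ≤ 1 := (abs_le.1 ha').2
    exact hconv hyB (hsymm y hyB) (by linarith) (by linarith) (by ring)
  have hnhds : B ∈ 𝓝 (0 : Fin d → ℝ) := Filter.mem_of_superset (hBoOpen.mem_nhds h0Bo) hBoB
  have habs : Absorbent ℝ B := absorbent_nhds_zero hnhds
  obtain ⟨z₀, hz₀⟩ := hZne
  obtain ⟨Cb, hCbdef⟩ : ∃ Cb : ℝ, Cb = 2 * R z₀ + 2 * nsq (c z₀) := ⟨_, rfl⟩
  have hCb0 : 0 ≤ Cb := by
    have u1 := sq_nonneg' (ρ z₀ • g z₀)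
    have u2 := sq_nonneg' (c z₀)
    rw [hCbdef, hRdef]; linarith
  have hbdd : ∀ v ∈ B, nsq v ≤ Cb := by
    intro v hv
    have h := (hv z₀ hz₀).1
    have := sq_le_two_add_two v (c z₀)
    rw [hCbdef]; linarith
  -- the strict norm
  refine ⟨⟨gauge B, ?_, ?_, ?_, ?_⟩, ?_⟩
  · -- eq_zero_iff
    intro x
    constructor
    · intro h
      by_contra hx0
      have hsq : 0 < nsq x := sq_pos_of_ne hx0
      obtain ⟨ε, hεdef⟩ : ∃ ε : ℝ, ε = min 1 (nsq x / (Cb + 1)) := ⟨_, rfl⟩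
      have hεpos : 0 < ε := by
        rw [hεdef]
        apply lt_min one_pos
        apply div_pos hsq; linarith
      have hlt : gauge B x < ε := by rw [h]; exact hεpos
      obtain ⟨b, hb0, hbε, hxb⟩ := exists_lt_of_gauge_lt habs hlt
      obtain ⟨y, hyB, rfl⟩ := hxb
      have hsqy : nsq y ≤ Cb := hbdd y hyB
      have hsqby : nsq (b • y) = b^2 * nsq y := sq_smul b y
      have hb1 : b ≤ 1 := by
        have := min_le_left (1:ℝ) (nsq (b • y) / (Cb + 1))
        rw [← hεdef] at this; linarith
      have hb2 : b < nsq (b • y) / (Cb + 1) := by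
        have := min_le_right (1:ℝ) (nsq (b • y) / (Cb + 1))
        rw [← hεdef] at this; linarith
      have hb3 : b * (Cb + 1) < nsq (b • y) := by
        rw [lt_div_iff₀ (show (0:ℝ) < Cb + 1 by linarith)] at hb2
        linarith
      nlinarith [mul_pos hb0 hb0, mul_nonneg hb0.le hCb0]
    · rintro rfl; exact gauge_zero
  · -- smul
    intro a x
    rw [← Real.norm_eq_abs]
    exact gauge_smul hbal a x
  · -- add_le
    exact gauge_add_le hconv habs
  · -- strictly convex
    intro x y hx1 hy1 hxy
    have hxB : x ∈ B := by
      have := (gauge_le_one_iff_mem_closure hconv hnhds).1 (le_of_eq hx1)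
      rwa [hBclosed.closure_eq] at this
    have hyB : y ∈ B := by
      have := (gauge_le_one_iff_mem_closure hconv hnhds).1 (le_of_eq hy1)
      rwa [hBclosed.closure_eq] at this
    have hmBo : ((1/2 : ℝ) • (x + y)) ∈ Bo := by
      intro z hz
      have hxyne : 0 < nsq (x - y) := sq_pos_of_ne (sub_ne_zero.2 hxy)
      have h12 : (1/2 : ℝ) + 1/2 = 1 := by norm_num
      constructor
      · have hm : (1/2 : ℝ) • (x + y) - c z =
            (1/2 : ℝ) • (x - c z) + (1/2 : ℝ) • (y - c z) := by module
        rw [hm]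
        have hcb := sq_combo h12 (x - c z) (y - c z)
        have hdd : (x - c z) - (y - c z) = x - y := by abel
        rw [hdd] at hcb
        have h1' := (hxB z hz).1
        have h2' := (hyB z hz).1
        nlinarith
      · have hm : (1/2 : ℝ) • (x + y) + c z =
            (1/2 : ℝ) • (x + c z) + (1/2 : ℝ) • (y + c z) := by module
        rw [hm]
        have hcb := sq_combo h12 (x + c z) (y + c z)
        have hdd : (x + c z) - (y + c z) = x - y := by abel
        rw [hdd] at hcb
        have h1' := (hxB z hz).2
        have h2' := (hyB z hz).2
        nlinarith
    have hmint : ((1/2 : ℝ) • (x + y)) ∈ interior B :=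
      (hBoOpen.subset_interior_iff.2 hBoB) hmBo
    exact (gauge_lt_one_iff_mem_interior hconv hnhds).2 hmint
  · -- gauge = 1 on Z
    intro z hz
    refine le_antisymm (gauge_le_one_of_mem (hZB z hz)) ?_
    by_contra hlt
    push_neg at hlt
    obtain ⟨b, hb0, hb1, hzb⟩ := exists_lt_of_gauge_lt habs hlt
    obtain ⟨y, hyB, hy⟩ := hzb
    have hyz : y = b⁻¹ • z := by
      rw [← hy, smul_smul, inv_mul_cancel₀ hb0.ne', one_smul]
    have hcond := (hyB z hz).1
    rw [hyz] at hcond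
    have hexp : b⁻¹ • z - c z = (b⁻¹ - 1) • z + ρ z • g z := by
      rw [hcdef, sub_smul, one_smul]; abel
    have hiprg : ip ((b⁻¹ - 1) • z) (ρ z • g z) = (b⁻¹ - 1) * (ρ z * ip (g z) z) := by
      rw [ip_smul_right, ip_smul_left, ip_comm z (g z)]; ring
    rw [hexp, sq_add, sq_smul, hiprg, hRdef] at hcond
    have hb' : 1 < b⁻¹ := (one_lt_inv₀ hb0).2 hb1
    have hipz : 0 < ip (g z) z := hgz z hz
    have hρz : 0 < ρ z := hρpos z hz
    nlinarith [sq_nonneg' z, mul_pos (mul_pos (sub_pos.2 hb') hρz) hipz,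
      mul_nonneg (mul_nonneg (sub_pos.2 hb').le (sub_pos.2 hb').le) (sq_nonneg' z)]

end SVaux

set_option maxHeartbeats 1000000

/-- For every `d ≥ 2` and `n ≥ 1`, `M_d(n,n) ≤ 2 · W_d(2n)`. -/
theorem M_le_two_W (d n : ℕ) (hd : 2 ≤ d) (hn : 1 ≤ n) :
    Mfun d n n ≤ 2 * Wfun d (2 * n) := by
  classical
  refine csSup_le' ?_
  rintro k ⟨P, Q, S, hP, hQ, hSPQ, hCI, hcard⟩
  rcases Nat.eq_zero_or_pos k with rfl | hkpos
  · exact Nat.zero_le _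
  have hSne : S.Nonempty := by
    rw [← Finset.card_pos, hcard]; exact hkpos
  -- choose representations s = p + q
  have htot : ∀ s : Fin d → ℝ, ∃ pqr : (Fin d → ℝ) × (Fin d → ℝ),
      s ∈ S → (pqr.1 ∈ P ∧ pqr.2 ∈ Q ∧ pqr.1 + pqr.2 = s) := by
    intro s
    by_cases hs : s ∈ S
    · obtain ⟨x, hx, y, hy, hxy⟩ := Set.mem_add.1 (hSPQ hs)
      exact ⟨(x, y), fun _ => ⟨hx, hy, hxy⟩⟩
    · exact ⟨(0,0), fun h => absurd h hs⟩
  choose pq hpq using htot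
  -- exposing functionals
  choose F hFne hFexp using fun s => SVaux.exists_expose (by omega) S hCI s
  -- a direction u on which no F s vanishes
  obtain ⟨u, -, hu0⟩ := SVaux.exists_forall_ne
    (S.toList.map (fun s => (F s, (0:ℝ))))
    (by
      intro p hp
      obtain ⟨s, hs, rfl⟩ := List.mem_map.1 hp
      exact hFne s)
    Set.univ isOpen_univ ⟨0, Set.mem_univ 0⟩
  have hu : ∀ s ∈ S, F s u ≠ 0 := by
    intro s hs
    have hmm : ((F s, (0:ℝ))) ∈ S.toList.map (fun s => (F s, (0:ℝ))) :=
      List.mem_map.2 ⟨s, Finset.mem_toList.2 hs, rfl⟩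
    simpa using hu0 _ hmm
  -- keep the bigger sign class
  obtain ⟨u', S', hS'sub, hS'neg, hS'card⟩ :
      ∃ (u' : Fin d → ℝ) (S' : Finset (Fin d → ℝ)), S' ⊆ S ∧
        (∀ s ∈ S', F s u' < 0) ∧ k ≤ 2 * S'.card := by
    have hsplit := Finset.card_filter_add_card_filter_not
      (s := S) (p := fun s => F s u < 0)
    rcases le_or_gt k (2 * (S.filter (fun s => F s u < 0)).card) with h | h
    · exact ⟨u, S.filter _, Finset.filter_subset _ _,
        fun s hs => (Finset.mem_filter.1 hs).2, h⟩
    · refine ⟨-u, S.filter (fun s => ¬ F s u < 0), Finset.filter_subset _ _, ?_, ?_⟩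
      · intro s hs
        have h1 := (Finset.mem_filter.1 hs).2
        have h2 := hu s (Finset.mem_filter.1 hs).1
        have h3 : 0 < F s u := lt_of_le_of_ne (not_lt.1 h1) (Ne.symm h2)
        rw [map_neg]; linarith
      · omega
  have hS'ne : S'.Nonempty := by
    rw [← Finset.card_pos]; omega
  -- the open region for the translation w
  obtain ⟨O, hOdef⟩ : ∃ O : Set (Fin d → ℝ),
      O = ⋂ s ∈ S', ⋂ x ∈ S', {w : Fin d → ℝ | 2 * F s w < F s (s + x)} := ⟨_, rfl⟩
  have hOopen : IsOpen O := by
    rw [hOdef]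
    refine isOpen_biInter_finset fun s _ => isOpen_biInter_finset fun x _ => ?_
    have he : {w : Fin d → ℝ | 2 * F s w < F s (s + x)}
        = (F s) ⁻¹' (Set.Iio (F s (s+x) / 2)) := by
      ext w
      simp only [Set.mem_setOf_eq, Set.mem_preimage, Set.mem_Iio]
      constructor <;> intro h <;> linarith
    rw [he]
    exact isOpen_Iio.preimage (F s).continuous_of_finiteDimensional
  have hOne : O.Nonempty := by
    obtain ⟨t, ht⟩ : ∃ t : ℝ, ∀ s ∈ S', ∀ x ∈ S', F s (s+x) / (2 * F s u') < t := by
      refine ⟨1 + (S' ×ˢ S').sup' (hS'ne.product hS'ne)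
        (fun pr => F pr.1 (pr.1 + pr.2) / (2 * F pr.1 u')), ?_⟩
      intro s hs x hx
      have hle := Finset.le_sup' (f := fun pr : (Fin d → ℝ) × (Fin d → ℝ) =>
        F pr.1 (pr.1 + pr.2) / (2 * F pr.1 u')) (b := (s, x))
        (Finset.mem_product.2 ⟨hs, hx⟩)
      dsimp only at hle
      linarith
    refine ⟨t • u', ?_⟩
    rw [hOdef]
    refine Set.mem_iInter₂.2 fun s hs => Set.mem_iInter₂.2 fun x hx => ?_
    simp only [Set.mem_setOf_eq, map_smul, smul_eq_mul]
    have hneg : 2 * F s u' < 0 := by have := hS'neg s hs; linarith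
    have hd1 := (div_lt_iff_of_neg hneg).1 (ht s hs x hx)
    linarith
  -- annihilating functionals for all pairs
  choose HH hHne hHval using fun pr : (Fin d → ℝ) × (Fin d → ℝ) =>
    SVaux.exists_ann hd (pr.2 - pr.1)
  -- pick w
  obtain ⟨w, hwO, hwL⟩ := SVaux.exists_forall_ne
    ((S' ×ˢ S').toList.map (fun pr => (HH pr, HH pr pr.1)))
    (by
      intro p hp
      obtain ⟨pr, hpr, rfl⟩ := List.mem_map.1 hp
      exact hHne pr)
    O hOopen hOne
  have hwline : ∀ pr ∈ S' ×ˢ S', HH pr w ≠ HH pr pr.1 := by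
    intro pr hpr
    exact hwL _ (List.mem_map.2 ⟨pr, Finset.mem_toList.2 hpr, rfl⟩)
  have hwOcond : ∀ s ∈ S', ∀ x ∈ S', 2 * F s w < F s (s + x) := by
    intro s hs x hx
    rw [hOdef] at hwO
    exact Set.mem_iInter₂.1 (Set.mem_iInter₂.1 hwO s hs) x hx
  -- the difference points and their exposing vectors
  obtain ⟨Z, hZdef⟩ : ∃ Z : Finset (Fin d → ℝ), Z = S'.image (fun s => s - w) := ⟨_, rfl⟩
  have hZne : Z.Nonempty := by rw [hZdef]; exact hS'ne.image _
  obtain ⟨g, hgdef⟩ : ∃ g : (Fin d → ℝ) → (Fin d → ℝ),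
      g = fun z i => F (z + w) (fun j => if i = j then 1 else 0) := ⟨_, rfl⟩
  have hipg : ∀ s v, SVaux.ip (g (s - w)) v = F s v := by
    intro s v
    have hswe : s - w + w = s := by abel
    rw [hgdef]
    simp only [hswe]
    exact SVaux.ip_vec (F s) v
  have h1 : ∀ z ∈ Z, ∀ y ∈ Z, y ≠ z → SVaux.ip (g z) y < SVaux.ip (g z) z := by
    intro z hz y hy hyz
    rw [hZdef] at hz hy
    obtain ⟨s, hs, rfl⟩ := Finset.mem_image.1 hz
    obtain ⟨x, hx, rfl⟩ := Finset.mem_image.1 hy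
    have hxs : x ≠ s := fun h => hyz (by rw [h])
    rw [hipg, hipg, map_sub, map_sub]
    have := hFexp s (hS'sub hs) x (hS'sub hx) hxs
    linarith
  have h2 : ∀ z ∈ Z, ∀ y ∈ Z, 0 < SVaux.ip (g z) z + SVaux.ip (g z) y := by
    intro z hz y hy
    rw [hZdef] at hz hy
    obtain ⟨s, hs, rfl⟩ := Finset.mem_image.1 hz
    obtain ⟨x, hx, rfl⟩ := Finset.mem_image.1 hy
    rw [hipg, hipg, map_sub, map_sub]
    have hcond := hwOcond s hs x hx
    rw [map_add] at hcond
    linarith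
  obtain ⟨ν, hν⟩ := SVaux.exists_strictNorm Z hZne g h1 h2
  -- the point set
  haveI : Infinite (Fin d → ℝ) := Infinite.of_injective (fun r : ℝ => fun _ => r)
    (by
      intro a b hab
      exact congrFun hab ⟨0, by omega⟩)
  obtain ⟨Q', hQ'def⟩ : ∃ Q' : Finset (Fin d → ℝ), Q' = Q.image (fun q => w - q) := ⟨_, rfl⟩
  have hcard0 : (P ∪ Q').card ≤ 2 * n := by
    calc (P ∪ Q').card ≤ P.card + Q'.card := Finset.card_union_le _ _
    _ ≤ n + n := by
        refine Nat.add_le_add (le_of_eq hP) ?_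
        rw [hQ'def]
        calc (Q.image _).card ≤ Q.card := Finset.card_image_le
        _ = n := hQ
    _ = 2 * n := by omega
  obtain ⟨X, hXsub, hXcard⟩ := Infinite.exists_superset_card_eq (P ∪ Q') (2*n) hcard0
  -- the pair family
  obtain ⟨T, hTdef⟩ : ∃ T : Finset ((Fin d → ℝ) × (Fin d → ℝ)),
      T = S'.image (fun s => ((pq s).1, w - (pq s).2)) := ⟨_, rfl⟩
  have hrepS' : ∀ s ∈ S', (pq s).1 ∈ P ∧ (pq s).2 ∈ Q ∧ (pq s).1 + (pq s).2 = s :=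
    fun s hs => hpq s (hS'sub hs)
  have hinj : Set.InjOn (fun s => ((pq s).1, w - (pq s).2)) S' := by
    intro a ha b hb hab
    have ha' := hrepS' a (by exact_mod_cast ha)
    have hb' := hrepS' b (by exact_mod_cast hb)
    have hab' : ((pq a).1, w - (pq a).2) = ((pq b).1, w - (pq b).2) := hab
    obtain ⟨h1', h2'⟩ := Prod.mk.inj hab'
    have h2'' : (pq a).2 = (pq b).2 := sub_right_injective h2'
    calc a = (pq a).1 + (pq a).2 := ha'.2.2.symm
    _ = (pq b).1 + (pq b).2 := by rw [h1', h2'']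
    _ = b := hb'.2.2
  have hTcard : T.card = S'.card := by
    rw [hTdef]
    exact Finset.card_image_of_injOn hinj
  have hdiff : ∀ s ∈ S', (pq s).1 - (w - (pq s).2) = s - w := by
    intro s hs
    have hsum := (hrepS' s hs).2.2
    conv_rhs => rw [← hsum]
    abel
  -- membership in the W family
  have hmemW : T.card ∈ {k | ∃ (S₂ : Finset (Fin d → ℝ)) (ν₂ : StrictNorm d)
      (T₂ : Finset ((Fin d → ℝ) × (Fin d → ℝ))),
    S₂.card = 2*n ∧
    (∀ e ∈ T₂, e.1 ∈ S₂ ∧ e.2 ∈ S₂ ∧ ν₂.toFun (e.1 - e.2) = 1) ∧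
    (∀ e ∈ T₂, ∀ f ∈ T₂, e ≠ f → ∀ c : ℝ, e.1 - e.2 ≠ c • (f.1 - f.2)) ∧
    T₂.card = k} := by
    refine ⟨X, ν, T, hXcard, ?_, ?_, rfl⟩
    · intro e he
      rw [hTdef] at he
      obtain ⟨s, hs, rfl⟩ := Finset.mem_image.1 he
      refine ⟨hXsub (Finset.mem_union_left _ (hrepS' s hs).1),
        hXsub (Finset.mem_union_right _ ?_), ?_⟩
      · rw [hQ'def]
        exact Finset.mem_image.2 ⟨(pq s).2, (hrepS' s hs).2.1, rfl⟩
      · show ν.toFun ((pq s).1 - (w - (pq s).2)) = 1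
        rw [hdiff s hs]
        refine hν _ ?_
        rw [hZdef]
        exact Finset.mem_image.2 ⟨s, hs, rfl⟩
    · intro e he f hf hef c hc
      rw [hTdef] at he hf
      obtain ⟨s, hs, rfl⟩ := Finset.mem_image.1 he
      obtain ⟨x, hx, rfl⟩ := Finset.mem_image.1 hf
      have hsx : s ≠ x := fun h => hef (by rw [h])
      rw [show ((pq s).1, w - (pq s).2).1 - ((pq s).1, w - (pq s).2).2
          = (pq s).1 - (w - (pq s).2) from rfl] at hc
      rw [show ((pq x).1, w - (pq x).2).1 - ((pq x).1, w - (pq x).2).2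
          = (pq x).1 - (w - (pq x).2) from rfl] at hc
      rw [hdiff s hs, hdiff x hx] at hc
      have hprod : (s, x) ∈ S' ×ˢ S' := Finset.mem_product.2 ⟨hs, hx⟩
      have hline := hwline (s,x) hprod
      have hHsx : HH (s,x) x = HH (s,x) s := by
        have hv := hHval (s,x)
        rw [map_sub] at hv
        dsimp only at hv
        linarith
      have happ := congrArg (HH (s,x)) hc
      rw [map_sub, map_smul, map_sub, hHsx, smul_eq_mul] at happ
      have hz0 : (c - 1) * (HH (s,x) s - HH (s,x) w) = 0 := by nlinarith [happ]
      rcases mul_eq_zero.1 hz0 with h | h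
      · have hc1 : c = 1 := by linarith
        rw [hc1, one_smul] at hc
        exact hsx (sub_left_injective hc)
      · exact hline (by linarith)
  -- the W family is bounded
  have hbddW : BddAbove {k | ∃ (S₂ : Finset (Fin d → ℝ)) (ν₂ : StrictNorm d)
      (T₂ : Finset ((Fin d → ℝ) × (Fin d → ℝ))),
    S₂.card = 2*n ∧
    (∀ e ∈ T₂, e.1 ∈ S₂ ∧ e.2 ∈ S₂ ∧ ν₂.toFun (e.1 - e.2) = 1) ∧
    (∀ e ∈ T₂, ∀ f ∈ T₂, e ≠ f → ∀ c : ℝ, e.1 - e.2 ≠ c • (f.1 - f.2)) ∧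
    T₂.card = k} := by
    refine ⟨2*n * (2*n), ?_⟩
    rintro m ⟨S₂, ν₂, T₂, hS₂, hT₂mem, -, rfl⟩
    have hsub : T₂ ⊆ S₂ ×ˢ S₂ := fun e he =>
      Finset.mem_product.2 ⟨(hT₂mem e he).1, (hT₂mem e he).2.1⟩
    calc T₂.card ≤ (S₂ ×ˢ S₂).card := Finset.card_le_card hsub
    _ = 2*n * (2*n) := by rw [Finset.card_product, hS₂]
  have hWge : T.card ≤ Wfun d (2*n) := le_csSup hbddW hmemW
  calc k ≤ 2 * S'.card := hS'card
  _ = 2 * T.card := by rw [hTcard]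
  _ ≤ 2 * Wfun d (2*n) := Nat.mul_le_mul_left _ hWge
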